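/- There is a universal constant C > 0 such that the following holds. Let X ~ Binomial(m, p) and Y ~ Binomial(n, q) be independent with m ≥ 2, q ∈ [0,1], mp ≥ 64 log m, and p ≤ 2/3. Then for every real ℓ with 1 ≤ ℓ ≤ √(mp log m), Pr(Y ≥ X − ℓ) ≤ Pr(Y ≥ X) · exp(C ℓ √(log m / (mp))) + 2 m^{-2}. -/

import Mathlib

open Real Filter

/-- Probability that a Binomial(m, p) random variable equals `k`. -/
noncomputable def binomProb (m : ℕ) (p : ℝ) (k : ℕ) : ℝ :=
  (m.choose k : ℝ) * p ^ k * (1 - p) ^ (m - k)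

/-- For independent `X ~ Binomial(m, p)` and `Y ~ Binomial(n, q)`,
the probability `Pr(Y ≥ X - ℓ)`. -/
noncomputable def prGEshift (m : ℕ) (p : ℝ) (n : ℕ) (q : ℝ) (ℓ : ℝ) : ℝ :=
  ∑ j ∈ Finset.range (m + 1), ∑ k ∈ Finset.range (n + 1),
    if (j : ℝ) - ℓ ≤ (k : ℝ) then binomProb m p j * binomProb n q k else 0

/-- For independent `X ~ Binomial(m, p)` and `Y ~ Binomial(n, q)`,
the probability `Pr(Y ≥ X)`. -/
noncomputable def prGE (m : ℕ) (p : ℝ) (n : ℕ) (q : ℝ) : ℝ :=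
  prGEshift m p n q 0

/-- `P(m, n, p, q) = Pr(Y ≥ X)` for independent `X ~ Binomial(m, max p q)`
and `Y ~ Binomial(n, min p q)`. -/
noncomputable def Pmn (m n : ℕ) (p q : ℝ) : ℝ :=
  prGE m (max p q) n (min p q)

/-- `P(n, p, q) = P(n, n, p, q)`. -/
noncomputable def Pn (n : ℕ) (p q : ℝ) : ℝ :=
  Pmn n n p q

lemma binomProb_nonneg {m : ℕ} {p : ℝ} (h0 : 0 ≤ p) (h1 : p ≤ 1) (k : ℕ) :
    0 ≤ binomProb m p k := by
  unfold binomProb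
  have : (0:ℝ) ≤ 1 - p := by linarith
  positivity

lemma sum_binomProb (n : ℕ) (q : ℝ) :
    ∑ k ∈ Finset.range (n + 1), binomProb n q k = 1 := by
  have h := add_pow q (1 - q) n
  simp only [add_sub_cancel, one_pow] at h
  rw [h]
  exact Finset.sum_congr rfl fun k _ => by unfold binomProb; ring

lemma binom_mgf (m : ℕ) (p s : ℝ) :
    ∑ j ∈ Finset.range (m + 1), binomProb m p j * Real.exp (-(s * j)) =
      (p * Real.exp (-s) + (1 - p)) ^ m := by
  rw [add_pow]
  refine Finset.sum_congr rfl fun j _ => ?_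
  unfold binomProb
  rw [mul_pow, ← Real.exp_nat_mul, show (j:ℝ) * -s = -(s * j) by ring]
  ring

lemma exp_neg_le (s : ℝ) (hs : 0 ≤ s) : Real.exp (-s) ≤ 1 - s + s ^ 2 := by
  have h1 : s + 1 ≤ Real.exp s := Real.add_one_le_exp s
  have h2 : Real.exp (-s) * Real.exp s = 1 := by
    rw [← Real.exp_add]; simp
  have h3 : Real.exp (-s) * (s + 1) ≤ 1 := by
    calc Real.exp (-s) * (s + 1) ≤ Real.exp (-s) * Real.exp s :=
          mul_le_mul_of_nonneg_left h1 (Real.exp_nonneg _)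
      _ = 1 := h2
  nlinarith [Real.exp_pos (-s), sq_nonneg s, sq_nonneg (s*s)]

lemma chernoff (m : ℕ) (p t : ℝ) (h0 : 0 ≤ p) (h1 : p ≤ 1)
    (hμ : 0 < (m : ℝ) * p) (ht : 0 ≤ t) :
    ∑ j ∈ Finset.range (m + 1),
        (if (j : ℝ) < (m : ℝ) * p - t then binomProb m p j else 0)
      ≤ Real.exp (-(t ^ 2) / (4 * ((m : ℝ) * p))) := by
  set μ := (m : ℝ) * p with hμdef
  set s := t / (2 * μ) with hsdef
  have hs0 : 0 ≤ s := by positivity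
  have hterm : ∀ j ∈ Finset.range (m + 1),
      (if (j : ℝ) < μ - t then binomProb m p j else 0)
        ≤ Real.exp (s * (μ - t)) * (binomProb m p j * Real.exp (-(s * j))) := by
    intro j _
    by_cases h : (j : ℝ) < μ - t
    · rw [if_pos h]
      have hP := binomProb_nonneg h0 h1 (m := m) j
      have h1le : 1 ≤ Real.exp (s * (μ - t) + -(s * j)) :=
        Real.one_le_exp (by nlinarith)
      calc binomProb m p j = binomProb m p j * 1 := (mul_one _).symm
        _ ≤ binomProb m p j * Real.exp (s * (μ - t) + -(s * j)) :=
            mul_le_mul_of_nonneg_left h1le hP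
        _ = Real.exp (s * (μ - t)) * (binomProb m p j * Real.exp (-(s * j))) := by
            rw [Real.exp_add]; ring
    · rw [if_neg h]
      have hP := binomProb_nonneg h0 h1 (m := m) j
      positivity
  calc ∑ j ∈ Finset.range (m + 1),
        (if (j : ℝ) < μ - t then binomProb m p j else 0)
      ≤ ∑ j ∈ Finset.range (m + 1),
          Real.exp (s * (μ - t)) * (binomProb m p j * Real.exp (-(s * j))) :=
        Finset.sum_le_sum hterm
    _ = Real.exp (s * (μ - t)) * (p * Real.exp (-s) + (1 - p)) ^ m := by
        rw [← Finset.mul_sum, binom_mgf]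
    _ ≤ Real.exp (s * (μ - t)) * Real.exp ((m : ℝ) * (p * (Real.exp (-s) - 1))) := by
        apply mul_le_mul_of_nonneg_left _ (Real.exp_nonneg _)
        have hbase0 : 0 ≤ p * Real.exp (-s) + (1 - p) := by
          have := Real.exp_nonneg (-s); nlinarith
        have hbase : p * Real.exp (-s) + (1 - p) ≤ Real.exp (p * (Real.exp (-s) - 1)) := by
          have := Real.add_one_le_exp (p * (Real.exp (-s) - 1))
          linarith
        calc (p * Real.exp (-s) + (1 - p)) ^ m
            ≤ Real.exp (p * (Real.exp (-s) - 1)) ^ m := pow_le_pow_left₀ hbase0 hbase m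
          _ = Real.exp ((m : ℝ) * (p * (Real.exp (-s) - 1))) := (Real.exp_nat_mul _ m).symm
    _ = Real.exp (s * (μ - t) + (m : ℝ) * (p * (Real.exp (-s) - 1))) := (Real.exp_add _ _).symm
    _ ≤ Real.exp (-(t ^ 2) / (4 * μ)) := by
        apply Real.exp_le_exp.mpr
        have hexpneg : Real.exp (-s) ≤ 1 - s + s ^ 2 := exp_neg_le s hs0
        have hmp : (m : ℝ) * (p * (Real.exp (-s) - 1)) = μ * (Real.exp (-s) - 1) := by
          rw [hμdef]; ring
        rw [hmp]
        have h2 : μ * (Real.exp (-s) - 1) ≤ μ * (-s + s ^ 2) := by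
          apply mul_le_mul_of_nonneg_left _ hμ.le
          linarith
        have h3 : s * (μ - t) + μ * (-s + s ^ 2) = -(t ^ 2) / (4 * μ) := by
          rw [hsdef]; field_simp; ring
        linarith

noncomputable def Gaux (n : ℕ) (q : ℝ) (ℓ : ℝ) (j : ℕ) : ℝ :=
  ∑ k ∈ Finset.range (n + 1), if (j : ℝ) - ℓ ≤ (k : ℝ) then binomProb n q k else 0

lemma prGEshift_eq (m : ℕ) (p : ℝ) (n : ℕ) (q : ℝ) (ℓ : ℝ) :
    prGEshift m p n q ℓ =
      ∑ j ∈ Finset.range (m + 1), binomProb m p j * Gaux n q ℓ j := by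
  unfold prGEshift Gaux
  refine Finset.sum_congr rfl fun j _ => ?_
  rw [Finset.mul_sum]
  exact Finset.sum_congr rfl fun k _ => by rw [mul_ite, mul_zero]

lemma Gaux_nonneg {n : ℕ} {q : ℝ} (h0 : 0 ≤ q) (h1 : q ≤ 1) (ℓ : ℝ) (j : ℕ) :
    0 ≤ Gaux n q ℓ j := by
  unfold Gaux
  apply Finset.sum_nonneg
  intro k _
  split
  · exact binomProb_nonneg h0 h1 k
  · exact le_rfl

lemma Gaux_le_one {n : ℕ} {q : ℝ} (h0 : 0 ≤ q) (h1 : q ≤ 1) (ℓ : ℝ) (j : ℕ) :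
    Gaux n q ℓ j ≤ 1 := by
  unfold Gaux
  calc ∑ k ∈ Finset.range (n + 1), (if (j : ℝ) - ℓ ≤ (k : ℝ) then binomProb n q k else 0)
      ≤ ∑ k ∈ Finset.range (n + 1), binomProb n q k := by
        apply Finset.sum_le_sum
        intro k _
        split
        · exact le_rfl
        · exact binomProb_nonneg h0 h1 k
    _ = 1 := sum_binomProb n q

lemma Gaux_shift {n : ℕ} {q : ℝ} {ℓ : ℝ} {j L : ℕ} (hLj : L ≤ j)
    (hL1 : (L : ℝ) ≤ ℓ) (hL2 : ℓ < (L : ℝ) + 1) :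
    Gaux n q ℓ j = Gaux n q 0 (j - L) := by
  unfold Gaux
  refine Finset.sum_congr rfl fun k _ => ?_
  refine if_congr ?_ rfl rfl
  rw [Nat.cast_sub hLj, sub_zero]
  constructor
  · intro h
    have h1 : (j : ℝ) < (k : ℝ) + (L : ℝ) + 1 := by linarith
    have h2 : j < k + L + 1 := by exact_mod_cast h1
    have h3 : j - L ≤ k := by omega
    have h4 : ((j - L : ℕ) : ℝ) ≤ (k : ℝ) := by exact_mod_cast h3
    rw [Nat.cast_sub hLj] at h4
    exact h4
  · intro h
    have h1 : ((j - L : ℕ) : ℝ) ≤ (k : ℝ) := by rw [Nat.cast_sub hLj]; exact h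
    have h2 : j - L ≤ k := by exact_mod_cast h1
    have h3 : j ≤ k + L := by omega
    have h4 : (j : ℝ) ≤ (k : ℝ) + (L : ℝ) := by exact_mod_cast h3
    linarith

lemma binom_ratio {m : ℕ} {p : ℝ} (hm : 2 ≤ m) (hp0 : 0 ≤ p) (hp23 : p ≤ 2 / 3)
    (hmp : 64 * Real.log m ≤ (m : ℝ) * p) (k : ℕ) (hk1 : k + 1 ≤ m)
    (hk : (m : ℝ) * p - 4 * Real.sqrt ((m : ℝ) * p * Real.log m) ≤ (k : ℝ)) :
    binomProb m p (k + 1) ≤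
      Real.exp (25 * Real.sqrt (Real.log m / ((m : ℝ) * p))) * binomProb m p k := by
  have hm1 : (1 : ℝ) < (m : ℝ) := by exact_mod_cast (by omega : 1 < m)
  have hlog : 0 < Real.log m := Real.log_pos hm1
  have hμpos : 0 < (m : ℝ) * p := lt_of_lt_of_le (by positivity) hmp
  obtain ⟨S, hS⟩ : ∃ S, S = Real.sqrt ((m : ℝ) * p * Real.log m) := ⟨_, rfl⟩
  rw [← hS] at hk
  obtain ⟨ε, hε⟩ : ∃ ε, ε = Real.sqrt (Real.log m / ((m : ℝ) * p)) := ⟨_, rfl⟩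
  rw [← hε]
  have hS0 : 0 ≤ S := hS ▸ Real.sqrt_nonneg _
  have hS2 : S ^ 2 = (m : ℝ) * p * Real.log m := by rw [hS]; exact Real.sq_sqrt (by positivity)
  have hS8 : S ≤ (m : ℝ) * p / 8 := by nlinarith [hS2, hmp, hμpos, hS0, hlog]
  have hε0 : 0 ≤ ε := hε ▸ Real.sqrt_nonneg _
  have hεμ : ε * ((m : ℝ) * p) = S := by
    have h1 : ε * ((m : ℝ) * p) = ε * Real.sqrt (((m : ℝ) * p) ^ 2) := by
      rw [Real.sqrt_sq hμpos.le]
    rw [h1, hε, ← Real.sqrt_mul (by positivity), hS]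
    congr 1
    field_simp
  have hkm : (k : ℝ) ≤ (m : ℝ) := by exact_mod_cast (by omega : k ≤ m)
  have hk2 : (m : ℝ) * p / 2 ≤ (k : ℝ) := by linarith
  have h1p : 1 / 3 ≤ 1 - p := by linarith
  -- key identity
  have hc : ((m.choose (k + 1) : ℝ)) * ((k : ℝ) + 1) = (m.choose k : ℝ) * ((m : ℝ) - k) := by
    have h := Nat.choose_succ_right_eq m k
    have h' : ((m.choose (k + 1) * (k + 1) : ℕ) : ℝ) = ((m.choose k * (m - k) : ℕ) : ℝ) := by
      exact_mod_cast congrArg (fun x : ℕ => (x : ℝ)) h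
    push_cast [Nat.cast_sub (by omega : k ≤ m)] at h'
    linarith [h']
  have hid : binomProb m p (k + 1) * (((k : ℝ) + 1) * (1 - p)) =
      binomProb m p k * (((m : ℝ) - k) * p) := by
    unfold binomProb
    have hexp : m - k = (m - (k + 1)) + 1 := by omega
    rw [hexp, pow_succ (1 - p), pow_succ p]
    push_cast
    linear_combination (p ^ k * p * (1 - p) ^ (m - (k + 1)) * (1 - p)) * hc
  -- numeric bound
  have he1 : 25 * S / 6 ≤ 25 * ε * (((k : ℝ) + 1) * (1 - p)) := by
    have hmm : ((m : ℝ) * p / 2) * (1 / 3) ≤ ((k : ℝ) + 1) * (1 - p) :=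
      mul_le_mul (by linarith) (by linarith) (by norm_num) (by positivity)
    have h2 := mul_le_mul_of_nonneg_left hmm (by positivity : (0:ℝ) ≤ 25 * ε)
    nlinarith [hεμ, h2]
  have he2 : (k : ℝ) * (1 - p) ≤ ((k : ℝ) + 1) * (1 - p) := by nlinarith [h1p]
  have hnum : ((m : ℝ) - k) * p ≤ Real.exp (25 * ε) * (((k : ℝ) + 1) * (1 - p)) := by
    have hexp1 : 1 + 25 * ε ≤ Real.exp (25 * ε) := by
      have := Real.add_one_le_exp (25 * ε); linarith
    have hD : (0 : ℝ) ≤ ((k : ℝ) + 1) * (1 - p) := by positivity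
    calc ((m : ℝ) - k) * p ≤ (1 + 25 * ε) * (((k : ℝ) + 1) * (1 - p)) := by
          have hx : (1 + 25 * ε) * (((k : ℝ) + 1) * (1 - p)) =
              ((k : ℝ) + 1) * (1 - p) + 25 * ε * (((k : ℝ) + 1) * (1 - p)) := by ring
          have hy : ((m : ℝ) - k) * p = (m : ℝ) * p - (k : ℝ) * p := by ring
          have hz : (k : ℝ) * (1 - p) = (k : ℝ) - (k : ℝ) * p := by ring
          linarith [he1, he2, hk, hS0]
      _ ≤ Real.exp (25 * ε) * (((k : ℝ) + 1) * (1 - p)) :=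
          mul_le_mul_of_nonneg_right hexp1 hD
  have hden : (0 : ℝ) < ((k : ℝ) + 1) * (1 - p) := by positivity
  have hP := binomProb_nonneg hp0 (by linarith) (m := m) k
  have h2 : binomProb m p (k + 1) * (((k : ℝ) + 1) * (1 - p)) ≤
      (Real.exp (25 * ε) * binomProb m p k) * (((k : ℝ) + 1) * (1 - p)) := by
    rw [hid]
    calc binomProb m p k * (((m : ℝ) - k) * p)
        ≤ binomProb m p k * (Real.exp (25 * ε) * (((k : ℝ) + 1) * (1 - p))) :=
          mul_le_mul_of_nonneg_left hnum hP
      _ = (Real.exp (25 * ε) * binomProb m p k) * (((k : ℝ) + 1) * (1 - p)) := by ring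
  exact le_of_mul_le_mul_right h2 hden

lemma binom_chain {m : ℕ} {p ℓ : ℝ} (hm : 2 ≤ m) (hp0 : 0 ≤ p) (hp23 : p ≤ 2 / 3)
    (hmp : 64 * Real.log m ≤ (m : ℝ) * p) (hℓ1 : 1 ≤ ℓ)
    (hℓS : ℓ ≤ Real.sqrt ((m : ℝ) * p * Real.log m)) :
    ∀ i : ℕ, i ≤ ⌊ℓ⌋₊ → ∀ j : ℕ, j ≤ m →
      (m : ℝ) * p - 3 * Real.sqrt ((m : ℝ) * p * Real.log m) ≤ (j : ℝ) →
      binomProb m p j ≤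
        Real.exp (25 * Real.sqrt (Real.log m / ((m : ℝ) * p)) * i) *
          binomProb m p (j - i) := by
  have hm1 : (1 : ℝ) < (m : ℝ) := by exact_mod_cast (by omega : 1 < m)
  have hlog : 0 < Real.log m := Real.log_pos hm1
  have hμpos : 0 < (m : ℝ) * p := lt_of_lt_of_le (by positivity) hmp
  have hS0 : 0 ≤ Real.sqrt ((m : ℝ) * p * Real.log m) := Real.sqrt_nonneg _
  have hS2 : (Real.sqrt ((m : ℝ) * p * Real.log m)) ^ 2 = (m : ℝ) * p * Real.log m :=
    Real.sq_sqrt (by positivity)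
  have hS8 : Real.sqrt ((m : ℝ) * p * Real.log m) ≤ (m : ℝ) * p / 8 := by
    nlinarith [hS2, hmp, hμpos, hS0, hlog]
  have hL1 : (⌊ℓ⌋₊ : ℝ) ≤ ℓ := Nat.floor_le (by linarith)
  intro i
  induction i with
  | zero => intro _ j _ _; simp
  | succ i ih =>
    intro hiL j hjm hjA
    have hi : i ≤ ⌊ℓ⌋₊ := by omega
    have h1 := ih hi j hjm hjA
    have hLj : (⌊ℓ⌋₊ : ℝ) < (j : ℝ) := by linarith
    have hLjn : ⌊ℓ⌋₊ < j := by exact_mod_cast hLj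
    have hij : i + 1 ≤ j := by omega
    have hk : j - (i + 1) + 1 = j - i := by omega
    have hi1L : ((i : ℝ) + 1) ≤ (⌊ℓ⌋₊ : ℝ) := by
      exact_mod_cast (by omega : i + 1 ≤ ⌊ℓ⌋₊)
    have hkc : (m : ℝ) * p - 4 * Real.sqrt ((m : ℝ) * p * Real.log m) ≤
        ((j - (i + 1) : ℕ) : ℝ) := by
      rw [Nat.cast_sub hij]
      push_cast
      linarith
    have hratio := binom_ratio hm hp0 hp23 hmp (j - (i + 1)) (by omega) hkc
    rw [hk] at hratio
    calc binomProb m p j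
        ≤ Real.exp (25 * Real.sqrt (Real.log m / ((m : ℝ) * p)) * i) *
            binomProb m p (j - i) := h1
      _ ≤ Real.exp (25 * Real.sqrt (Real.log m / ((m : ℝ) * p)) * i) *
            (Real.exp (25 * Real.sqrt (Real.log m / ((m : ℝ) * p))) *
              binomProb m p (j - (i + 1))) :=
          mul_le_mul_of_nonneg_left hratio (Real.exp_nonneg _)
      _ = Real.exp (25 * Real.sqrt (Real.log m / ((m : ℝ) * p)) * (i + 1 : ℕ)) *
            binomProb m p (j - (i + 1)) := by
          rw [← mul_assoc, ← Real.exp_add]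
          congr 2
          push_cast
          ring

theorem large_majority_upper_bound :
    ∃ C : ℝ, 0 < C ∧ ∀ (m n : ℕ) (p q ℓ : ℝ),
      2 ≤ m → 0 ≤ q → q ≤ 1 → 0 ≤ p → p ≤ 2 / 3 →
      64 * Real.log m ≤ (m : ℝ) * p →
      1 ≤ ℓ → ℓ ≤ Real.sqrt ((m : ℝ) * p * Real.log m) →
      prGEshift m p n q ℓ ≤
        prGE m p n q * Real.exp (C * ℓ * Real.sqrt (Real.log m / ((m : ℝ) * p)))
          + 2 / (m : ℝ) ^ 2 := by
  classical
  refine ⟨25, by norm_num, ?_⟩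
  intro m n p q ℓ hm hq0 hq1 hp0 hp23 hmp hℓ1 hℓS
  have hm1 : (1 : ℝ) < (m : ℝ) := by exact_mod_cast (by omega : 1 < m)
  have hm0 : (0 : ℝ) < (m : ℝ) := by linarith
  have hlog : 0 < Real.log m := Real.log_pos hm1
  have hμpos : 0 < (m : ℝ) * p := lt_of_lt_of_le (by positivity) hmp
  have hp1 : p ≤ 1 := by linarith
  have hS0 : 0 ≤ Real.sqrt ((m : ℝ) * p * Real.log m) := Real.sqrt_nonneg _
  have hS2 : (Real.sqrt ((m : ℝ) * p * Real.log m)) ^ 2 = (m : ℝ) * p * Real.log m :=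
    Real.sq_sqrt (by positivity)
  have hS8 : Real.sqrt ((m : ℝ) * p * Real.log m) ≤ (m : ℝ) * p / 8 := by
    nlinarith [hS2, hmp, hμpos, hS0, hlog]
  have hε0 : 0 ≤ Real.sqrt (Real.log m / ((m : ℝ) * p)) := Real.sqrt_nonneg _
  have hL1 : (⌊ℓ⌋₊ : ℝ) ≤ ℓ := Nat.floor_le (by linarith)
  have hL2 : ℓ < (⌊ℓ⌋₊ : ℝ) + 1 := Nat.lt_floor_add_one ℓ
  have hP : ∀ k : ℕ, 0 ≤ binomProb m p k := fun k => binomProb_nonneg hp0 hp1 k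
  have hGnn : ∀ (ℓ' : ℝ) (j : ℕ), 0 ≤ Gaux n q ℓ' j := fun ℓ' j => Gaux_nonneg hq0 hq1 ℓ' j
  have hG1 : ∀ (ℓ' : ℝ) (j : ℕ), Gaux n q ℓ' j ≤ 1 := fun ℓ' j => Gaux_le_one hq0 hq1 ℓ' j
  have hprGE : prGE m p n q =
      ∑ j ∈ Finset.range (m + 1), binomProb m p j * Gaux n q 0 j :=
    prGEshift_eq m p n q 0
  have hsplit := Finset.sum_filter_add_sum_filter_not (Finset.range (m + 1))
    (fun (j : ℕ) => (m : ℝ) * p - 3 * Real.sqrt ((m : ℝ) * p * Real.log m) ≤ (j : ℝ))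
    (fun j => binomProb m p j * Gaux n q ℓ j)
  rw [prGEshift_eq, ← hsplit, hprGE]
  -- the bad part
  have hbad : ∑ j ∈ Finset.filter
      (fun (j : ℕ) => ¬ ((m : ℝ) * p - 3 * Real.sqrt ((m : ℝ) * p * Real.log m) ≤ (j : ℝ)))
      (Finset.range (m + 1)), binomProb m p j * Gaux n q ℓ j ≤ 2 / (m : ℝ) ^ 2 := by
    have step1 : ∑ j ∈ Finset.filter
        (fun (j : ℕ) => ¬ ((m : ℝ) * p - 3 * Real.sqrt ((m : ℝ) * p * Real.log m) ≤ (j : ℝ)))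
        (Finset.range (m + 1)), binomProb m p j * Gaux n q ℓ j ≤
        ∑ j ∈ Finset.filter
          (fun (j : ℕ) => ¬ ((m : ℝ) * p - 3 * Real.sqrt ((m : ℝ) * p * Real.log m) ≤ (j : ℝ)))
          (Finset.range (m + 1)), binomProb m p j := by
      refine Finset.sum_le_sum fun j _ => ?_
      calc binomProb m p j * Gaux n q ℓ j ≤ binomProb m p j * 1 :=
            mul_le_mul_of_nonneg_left (hG1 ℓ j) (hP j)
        _ = binomProb m p j := mul_one _
    have step2 : ∑ j ∈ Finset.filter
        (fun (j : ℕ) => ¬ ((m : ℝ) * p - 3 * Real.sqrt ((m : ℝ) * p * Real.log m) ≤ (j : ℝ)))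
        (Finset.range (m + 1)), binomProb m p j =
        ∑ j ∈ Finset.range (m + 1),
          (if (j : ℝ) < (m : ℝ) * p - 3 * Real.sqrt ((m : ℝ) * p * Real.log m)
            then binomProb m p j else 0) := by
      rw [Finset.sum_filter]
      exact Finset.sum_congr rfl fun j _ => if_congr not_le rfl rfl
    have step3 := chernoff m p (3 * Real.sqrt ((m : ℝ) * p * Real.log m)) hp0 hp1 hμpos
      (by positivity)
    have step4 : Real.exp (-((3 * Real.sqrt ((m : ℝ) * p * Real.log m)) ^ 2) /
        (4 * ((m : ℝ) * p))) ≤ 2 / (m : ℝ) ^ 2 := by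
      have he : -((3 * Real.sqrt ((m : ℝ) * p * Real.log m)) ^ 2) / (4 * ((m : ℝ) * p)) =
          -(9 / 4 * Real.log m) := by
        rw [mul_pow, hS2]
        field_simp
        rw [mul_div_assoc, div_self (right_ne_zero_of_mul hμpos.ne')]
        ring
      rw [he]
      have h1 : Real.exp (-(9 / 4 * Real.log m)) ≤ Real.exp (-(2 * Real.log m)) :=
        Real.exp_le_exp.mpr (by linarith)
      have h2 : Real.exp (-(2 * Real.log m)) = 1 / (m : ℝ) ^ 2 := by
        rw [Real.exp_neg, show (2 : ℝ) * Real.log m = ((2 : ℕ) : ℝ) * Real.log m by norm_num,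
          Real.exp_nat_mul, Real.exp_log hm0, one_div]
      have h3 : (1 : ℝ) / (m : ℝ) ^ 2 ≤ 2 / (m : ℝ) ^ 2 :=
        (div_le_div_iff_of_pos_right (pow_pos hm0 2)).mpr (by norm_num)
      linarith [h2 ▸ h1]
    calc _ ≤ _ := step1
      _ = _ := step2
      _ ≤ _ := step3
      _ ≤ _ := step4
  -- the good part
  have hgood : ∑ j ∈ Finset.filter
      (fun (j : ℕ) => (m : ℝ) * p - 3 * Real.sqrt ((m : ℝ) * p * Real.log m) ≤ (j : ℝ))
      (Finset.range (m + 1)), binomProb m p j * Gaux n q ℓ j ≤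
      (∑ j ∈ Finset.range (m + 1), binomProb m p j * Gaux n q 0 j) *
        Real.exp (25 * ℓ * Real.sqrt (Real.log m / ((m : ℝ) * p))) := by
    have hmem : ∀ j ∈ Finset.filter
        (fun (j : ℕ) => (m : ℝ) * p - 3 * Real.sqrt ((m : ℝ) * p * Real.log m) ≤ (j : ℝ))
        (Finset.range (m + 1)),
        j ≤ m ∧ ((m : ℝ) * p - 3 * Real.sqrt ((m : ℝ) * p * Real.log m) ≤ (j : ℝ)) ∧
          ⌊ℓ⌋₊ ≤ j := by
      intro j hj
      rw [Finset.mem_filter, Finset.mem_range] at hj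
      refine ⟨by omega, hj.2, ?_⟩
      have h1 : (⌊ℓ⌋₊ : ℝ) < (j : ℝ) := by linarith [hj.2]
      exact (Nat.cast_lt.mp h1).le
    have hterm : ∀ j ∈ Finset.filter
        (fun (j : ℕ) => (m : ℝ) * p - 3 * Real.sqrt ((m : ℝ) * p * Real.log m) ≤ (j : ℝ))
        (Finset.range (m + 1)),
        binomProb m p j * Gaux n q ℓ j ≤
          Real.exp (25 * ℓ * Real.sqrt (Real.log m / ((m : ℝ) * p))) *
            (binomProb m p (j - ⌊ℓ⌋₊) * Gaux n q 0 (j - ⌊ℓ⌋₊)) := by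
      intro j hj
      obtain ⟨hjm, hjA, hLj⟩ := hmem j hj
      have hGeq : Gaux n q ℓ j = Gaux n q 0 (j - ⌊ℓ⌋₊) := Gaux_shift hLj hL1 hL2
      have hchain := binom_chain hm hp0 hp23 hmp hℓ1 hℓS ⌊ℓ⌋₊ le_rfl j hjm hjA
      have hee : Real.exp (25 * Real.sqrt (Real.log m / ((m : ℝ) * p)) * (⌊ℓ⌋₊ : ℝ)) ≤
          Real.exp (25 * ℓ * Real.sqrt (Real.log m / ((m : ℝ) * p))) := by
        apply Real.exp_le_exp.mpr
        nlinarith [hε0, hL1]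
      rw [hGeq]
      calc binomProb m p j * Gaux n q 0 (j - ⌊ℓ⌋₊)
          ≤ (Real.exp (25 * Real.sqrt (Real.log m / ((m : ℝ) * p)) * (⌊ℓ⌋₊ : ℝ)) *
              binomProb m p (j - ⌊ℓ⌋₊)) * Gaux n q 0 (j - ⌊ℓ⌋₊) :=
            mul_le_mul_of_nonneg_right hchain (hGnn 0 _)
        _ ≤ (Real.exp (25 * ℓ * Real.sqrt (Real.log m / ((m : ℝ) * p))) *
              binomProb m p (j - ⌊ℓ⌋₊)) * Gaux n q 0 (j - ⌊ℓ⌋₊) := by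
            apply mul_le_mul_of_nonneg_right _ (hGnn 0 _)
            exact mul_le_mul_of_nonneg_right hee (hP _)
        _ = Real.exp (25 * ℓ * Real.sqrt (Real.log m / ((m : ℝ) * p))) *
              (binomProb m p (j - ⌊ℓ⌋₊) * Gaux n q 0 (j - ⌊ℓ⌋₊)) := by ring
    calc ∑ j ∈ Finset.filter
          (fun (j : ℕ) => (m : ℝ) * p - 3 * Real.sqrt ((m : ℝ) * p * Real.log m) ≤ (j : ℝ))
          (Finset.range (m + 1)), binomProb m p j * Gaux n q ℓ j
        ≤ ∑ j ∈ Finset.filter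
            (fun (j : ℕ) => (m : ℝ) * p - 3 * Real.sqrt ((m : ℝ) * p * Real.log m) ≤ (j : ℝ))
            (Finset.range (m + 1)),
            Real.exp (25 * ℓ * Real.sqrt (Real.log m / ((m : ℝ) * p))) *
              (binomProb m p (j - ⌊ℓ⌋₊) * Gaux n q 0 (j - ⌊ℓ⌋₊)) :=
          Finset.sum_le_sum hterm
      _ = Real.exp (25 * ℓ * Real.sqrt (Real.log m / ((m : ℝ) * p))) *
            ∑ j ∈ Finset.filter
              (fun (j : ℕ) => (m : ℝ) * p - 3 * Real.sqrt ((m : ℝ) * p * Real.log m) ≤ (j : ℝ))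
              (Finset.range (m + 1)),
              binomProb m p (j - ⌊ℓ⌋₊) * Gaux n q 0 (j - ⌊ℓ⌋₊) := by
          rw [← Finset.mul_sum]
      _ ≤ Real.exp (25 * ℓ * Real.sqrt (Real.log m / ((m : ℝ) * p))) *
            ∑ j ∈ Finset.range (m + 1), binomProb m p j * Gaux n q 0 j := by
          apply mul_le_mul_of_nonneg_left _ (Real.exp_nonneg _)
          have hinj : ∀ x ∈ Finset.filter
              (fun (j : ℕ) => (m : ℝ) * p - 3 * Real.sqrt ((m : ℝ) * p * Real.log m) ≤ (j : ℝ))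
              (Finset.range (m + 1)), ∀ y ∈ Finset.filter
              (fun (j : ℕ) => (m : ℝ) * p - 3 * Real.sqrt ((m : ℝ) * p * Real.log m) ≤ (j : ℝ))
              (Finset.range (m + 1)), x - ⌊ℓ⌋₊ = y - ⌊ℓ⌋₊ → x = y := by
            intro x hx y hy hxy
            have h1 := (hmem x hx).2.2
            have h2 := (hmem y hy).2.2
            omega
          rw [show (∑ j ∈ Finset.filter
              (fun (j : ℕ) => (m : ℝ) * p - 3 * Real.sqrt ((m : ℝ) * p * Real.log m) ≤ (j : ℝ))
              (Finset.range (m + 1)),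
              binomProb m p (j - ⌊ℓ⌋₊) * Gaux n q 0 (j - ⌊ℓ⌋₊)) =
            ∑ j' ∈ Finset.image (· - ⌊ℓ⌋₊) (Finset.filter
              (fun (j : ℕ) => (m : ℝ) * p - 3 * Real.sqrt ((m : ℝ) * p * Real.log m) ≤ (j : ℝ))
              (Finset.range (m + 1))),
              binomProb m p j' * Gaux n q 0 j' from
            (Finset.sum_image (f := fun j' => binomProb m p j' * Gaux n q 0 j') hinj).symm]
          apply Finset.sum_le_sum_of_subset_of_nonneg
          · intro j' hj'
            rw [Finset.mem_image] at hj'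
            obtain ⟨x, hx, rfl⟩ := hj'
            rw [Finset.mem_range]
            have := (hmem x hx).1
            omega
          · intro j _ _
            exact mul_nonneg (hP j) (hGnn 0 j)
      _ = (∑ j ∈ Finset.range (m + 1), binomProb m p j * Gaux n q 0 j) *
            Real.exp (25 * ℓ * Real.sqrt (Real.log m / ((m : ℝ) * p))) := mul_comm _ _
  linarith [hgood, hbad]
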